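/- Let G be a connected graph, X, Y ⊆ V(G) with G[X] and G[Y] connected, Y disjoint from N[X], and suppose the distance in G between X and Y exceeds 10t where t ≥ 1. If G contains no induced cycle on more than t vertices, then at most one connected component of G − (N[X] ∪ N[Y]) that is contained in the component of G − N[X] containing Y is adjacent to a vertex of N[X]. -/

import Mathlib

open SimpleGraph

/-- The closed neighborhood `N[X]` of a set of vertices. -/
def closedNbhd {V : Type*} (G : SimpleGraph V) (X : Set V) : Set V :=
  {v | v ∈ X ∨ ∃ x ∈ X, G.Adj x v}

/-- `ReachWithin G W u v` : there is a walk from `u` to `v` all of whose vertices lie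
in `W` (i.e. `u` and `v` are in the same connected component of the subgraph induced
on `W`). -/
def ReachWithin {V : Type*} (G : SimpleGraph V) (W : Set V) (u v : V) : Prop :=
  ∃ p : G.Walk u v, ∀ z ∈ p.support, z ∈ W

/-- A walk is an induced cycle if it is a cycle and every edge of `G` between vertices of
the cycle is an edge of the cycle. -/
def IsInducedCycle {V : Type*} (G : SimpleGraph V) {v : V} (c : G.Walk v v) : Prop :=
  c.IsCycle ∧ ∀ x ∈ c.support, ∀ y ∈ c.support, G.Adj x y → s(x, y) ∈ c.edges

/-- `G` is `C_{>t}`-free: every induced cycle has at most `t` vertices. -/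
def CgtFree {V : Type*} (G : SimpleGraph V) (t : ℕ) : Prop :=
  ∀ (v : V) (c : G.Walk v v), IsInducedCycle G c → c.length ≤ t

namespace AtMostOneAux

variable {V : Type*} {G : SimpleGraph V}

lemma mem_closedNbhd_iff {X : Set V} {v : V} :
    v ∈ closedNbhd G X ↔ v ∈ X ∨ ∃ x ∈ X, G.Adj x v := Iff.rfl

lemma reachWithin_mem_left {W : Set V} {u v : V} (h : ReachWithin G W u v) : u ∈ W := by
  obtain ⟨p, hp⟩ := h; exact hp u p.start_mem_support

lemma reachWithin_mem_right {W : Set V} {u v : V} (h : ReachWithin G W u v) : v ∈ W := by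
  obtain ⟨p, hp⟩ := h; exact hp v p.end_mem_support

lemma reachWithin_refl {W : Set V} {u : V} (hu : u ∈ W) : ReachWithin G W u u :=
  ⟨Walk.nil, by intro z hz; simp only [Walk.support_nil, List.mem_singleton] at hz; subst hz; exact hu⟩

lemma reachWithin_symm {W : Set V} {u v : V} (h : ReachWithin G W u v) : ReachWithin G W v u := by
  obtain ⟨p, hp⟩ := h
  exact ⟨p.reverse, by intro z hz; rw [Walk.support_reverse, List.mem_reverse] at hz; exact hp z hz⟩

lemma reachWithin_trans {W : Set V} {u v w : V} (h : ReachWithin G W u v)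
    (h' : ReachWithin G W v w) : ReachWithin G W u w := by
  obtain ⟨p, hp⟩ := h; obtain ⟨q, hq⟩ := h'
  refine ⟨p.append q, ?_⟩
  intro z hz
  rcases (Walk.mem_support_append_iff _ _).mp hz with hz | hz
  exacts [hp z hz, hq z hz]

lemma reachWithin_of_mem_support {W : Set V} {u v z : V} {p : G.Walk u v}
    (hp : ∀ x ∈ p.support, x ∈ W) (hz : z ∈ p.support) : ReachWithin G W u z := by
  classical
  exact ⟨p.takeUntil z hz, fun x hx => hp x (p.support_takeUntil_subset hz hx)⟩

/-- monotone Lipschitz bound along a walk. -/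
lemma lip_walk {g : V → ℕ} (hg : ∀ {u v : V}, G.Adj u v → g u ≤ g v + 1) :
    ∀ {u v : V} (p : G.Walk u v), g u ≤ g v + p.length := by
  intro u v p
  induction p with
  | nil => simp
  | cons h q ih =>
    have h1 := hg h
    rw [Walk.length_cons]
    omega

/-- A walk of minimal length among walks with the same endpoints and support inside `M`
is chordless: any `G`-edge between two of its support vertices is one of its edges. -/
lemma chordfree_of_min {M : Set V} :
    ∀ {a b : V} (w : G.Walk a b), (∀ z ∈ w.support, z ∈ M) →
    (∀ w' : G.Walk a b, (∀ z ∈ w'.support, z ∈ M) → w.length ≤ w'.length) →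
    ∀ u v, u ∈ w.support → v ∈ w.support → G.Adj u v → s(u, v) ∈ w.edges := by
  classical
  intro a b w
  induction w with
  | nil =>
    intro _ _ u v hu hv huv
    simp only [Walk.support_nil, List.mem_singleton] at hu hv
    subst hu; subst hv
    exact absurd huv (G.loopless.irrefl _)
  | @cons a c b h q ih =>
    intro hM hmin u v hu hv huv
    have hMq : ∀ z ∈ q.support, z ∈ M := by
      intro z hz; exact hM z (by rw [Walk.support_cons]; exact List.mem_cons_of_mem _ hz)
    have hminq : ∀ w' : G.Walk c b, (∀ z ∈ w'.support, z ∈ M) → q.length ≤ w'.length := by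
      intro w' hw'
      have hle := hmin (Walk.cons h w') (by
        intro z hz
        rw [Walk.support_cons] at hz
        rcases List.mem_cons.mp hz with hza | hz
        · rw [hza]; exact hM a (by rw [Walk.support_cons]; exact List.mem_cons_self)
        · exact hw' z hz)
      simpa only [Walk.length_cons, Nat.add_le_add_iff_right] using hle
    have key : ∀ x, x ∈ q.support → G.Adj a x → s(a, x) ∈ (Walk.cons h q).edges := by
      intro x hx hax
      have hle := hmin (Walk.cons hax (q.dropUntil x hx)) (by
        intro z hz
        rw [Walk.support_cons] at hz
        rcases List.mem_cons.mp hz with hza | hz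
        · rw [hza]; exact hM a (by rw [Walk.support_cons]; exact List.mem_cons_self)
        · exact hMq z (q.support_dropUntil_subset hx hz))
      have hspec := congrArg Walk.length (q.take_spec hx)
      rw [Walk.length_append] at hspec
      simp only [Walk.length_cons] at hle
      have htake0 : (q.takeUntil x hx).length = 0 := by omega
      have hcx : c = x := Walk.eq_of_length_eq_zero htake0
      subst hcx
      rw [Walk.edges_cons]
      exact List.mem_cons_self
    rw [Walk.support_cons] at hu hv
    rcases List.mem_cons.mp hu with hua | huq
    · rcases List.mem_cons.mp hv with hva | hvq
      · rw [hua, hva] at huv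
        exact absurd huv (G.loopless.irrefl _)
      · rw [hua] at huv ⊢
        exact key v hvq huv
    · rcases List.mem_cons.mp hv with hva | hvq
      · rw [hva] at huv ⊢
        have h1 := key u huq huv.symm
        rwa [Sym2.eq_swap] at h1
      · rw [Walk.edges_cons]
        exact List.mem_cons_of_mem _ (ih hMq hminq u v huq hvq huv)

/-- Choose a minimal-length path between two vertex sets, within a vertex set `M`.
It is chordless and meets the two endpoint-sets only at its two endpoints. -/
lemma exists_min_walk (M A B : Set V)
    (hex : ∃ a ∈ A, ∃ b ∈ B, ∃ w : G.Walk a b, ∀ z ∈ w.support, z ∈ M) :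
    ∃ a ∈ A, ∃ b ∈ B, ∃ w : G.Walk a b, (∀ z ∈ w.support, z ∈ M) ∧ w.IsPath ∧
      (∀ u v, u ∈ w.support → v ∈ w.support → G.Adj u v → s(u, v) ∈ w.edges) ∧
      (∀ u, u ∈ w.support → u ∈ A → u = a) ∧
      (∀ u, u ∈ w.support → u ∈ B → u = b) := by
  classical
  set L : Set ℕ :=
    {n | ∃ a, a ∈ A ∧ ∃ b, b ∈ B ∧ ∃ w : G.Walk a b, (∀ z ∈ w.support, z ∈ M) ∧ w.length = n}
    with hLdef
  have hLne : L.Nonempty := by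
    obtain ⟨a, ha, b, hb, w, hw⟩ := hex
    exact ⟨w.length, a, ha, b, hb, w, hw, rfl⟩
  obtain ⟨a, ha, b, hb, w0, hw0M, hw0len⟩ := Nat.sInf_mem hLne
  set w : G.Walk a b := w0.bypass with hwdef
  have hwM : ∀ z ∈ w.support, z ∈ M := fun z hz => hw0M z (w0.support_bypass_subset hz)
  have hmin : ∀ a', a' ∈ A → ∀ b', b' ∈ B → ∀ w' : G.Walk a' b',
      (∀ z ∈ w'.support, z ∈ M) → w.length ≤ w'.length := by
    intro a' ha' b' hb' w' hw'
    calc w.length ≤ w0.length := w0.length_bypass_le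
      _ = sInf L := hw0len
      _ ≤ w'.length := Nat.sInf_le ⟨a', ha', b', hb', w', hw', rfl⟩
  refine ⟨a, ha, b, hb, w, hwM, w0.bypass_isPath, ?_, ?_, ?_⟩
  · exact chordfree_of_min w hwM (fun w' hw' => hmin a ha b hb w' hw')
  · intro u hu huA
    have h1 := hmin u huA b hb (w.dropUntil u hu)
      (fun z hz => hwM z (w.support_dropUntil_subset hu hz))
    have hspec := congrArg Walk.length (w.take_spec hu)
    rw [Walk.length_append] at hspec
    have h0 : (w.takeUntil u hu).length = 0 := by omega
    exact (Walk.eq_of_length_eq_zero h0).symm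
  · intro u hu huB
    have h1 := hmin a ha u huB (w.takeUntil u hu)
      (fun z hz => hwM z (w.support_takeUntil_subset hu hz))
    have hspec := congrArg Walk.length (w.take_spec hu)
    rw [Walk.length_append] at hspec
    have h0 : (w.dropUntil u hu).length = 0 := by omega
    exact Walk.eq_of_length_eq_zero h0

/-- A walk in an induced subgraph yields a walk in `G` with support in the set. -/
lemma induce_walk {S : Set V} : ∀ {u v : S} (_ : (G.induce S).Walk u v),
    ∃ w : G.Walk u.1 v.1, ∀ z ∈ w.support, z ∈ S := by
  intro u v p
  induction p with
  | nil =>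
    exact ⟨Walk.nil, by
      intro z hz
      simp only [Walk.support_nil, List.mem_singleton] at hz
      subst hz; exact Subtype.coe_prop _⟩
  | @cons u w' v h q ih =>
    obtain ⟨w, hw⟩ := ih
    have hadj : G.Adj u.1 w'.1 := h
    refine ⟨Walk.cons hadj w, ?_⟩
    intro z hz
    rw [Walk.support_cons] at hz
    rcases List.mem_cons.mp hz with hza | hz
    · rw [hza]; exact Subtype.coe_prop _
    · exact hw z hz

lemma walk_in_of_connected {S : Set V} (hS : (G.induce S).Connected) {x x' : V}
    (hx : x ∈ S) (hx' : x' ∈ S) :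
    ∃ w : G.Walk x x', ∀ z ∈ w.support, z ∈ S := by
  obtain ⟨p⟩ := hS.preconnected ⟨x, hx⟩ ⟨x', hx'⟩
  exact induce_walk p

/-- Any two vertices of `N[S]` (`S` inducing a connected subgraph) are joined by
a walk inside `N[S]`. -/
lemma closedNbhd_walk {S : Set V} (hS : (G.induce S).Connected) {z z' : V}
    (hz : z ∈ closedNbhd G S) (hz' : z' ∈ closedNbhd G S) :
    ∃ w : G.Walk z z', ∀ y ∈ w.support, y ∈ closedNbhd G S := by
  have half : ∀ u : V, u ∈ closedNbhd G S →
      ∃ x, x ∈ S ∧ ∃ w : G.Walk u x, ∀ y ∈ w.support, y ∈ closedNbhd G S := by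
    intro u hu
    rcases mem_closedNbhd_iff.mp hu with huS | ⟨x, hx, hadj⟩
    · exact ⟨u, huS, Walk.nil, by
        intro y hy
        simp only [Walk.support_nil, List.mem_singleton] at hy
        subst hy; exact mem_closedNbhd_iff.mpr (Or.inl huS)⟩
    · refine ⟨x, hx, Walk.cons hadj.symm Walk.nil, ?_⟩
      intro y hy
      simp only [Walk.support_cons, Walk.support_nil, List.mem_cons, List.mem_singleton,
        List.not_mem_nil, or_false] at hy
      rcases hy with rfl | rfl
      · exact mem_closedNbhd_iff.mpr (Or.inr ⟨x, hx, hadj⟩)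
      · exact mem_closedNbhd_iff.mpr (Or.inl hx)
  obtain ⟨x, hx, w1, hw1⟩ := half z hz
  obtain ⟨x', hx', w2, hw2⟩ := half z' hz'
  obtain ⟨wm, hwm⟩ := walk_in_of_connected hS hx hx'
  refine ⟨w1.append (wm.append w2.reverse), ?_⟩
  intro y hy
  rcases (Walk.mem_support_append_iff _ _).mp hy with hy | hy
  · exact hw1 y hy
  · rcases (Walk.mem_support_append_iff _ _).mp hy with hy | hy
    · exact mem_closedNbhd_iff.mpr (Or.inl (hwm y hy))
    · rw [Walk.support_reverse, List.mem_reverse] at hy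
      exact hw2 y hy

/-- Along a walk avoiding `NX` that ends in `NY` (starting outside `NY`), there is a
last vertex outside `NX ∪ NY` (reachable from the start within the complement)
with a neighbour in `NY`. -/
lemma first_enter {NX NY : Set V} :
    ∀ {d y : V} (p : G.Walk d y), (∀ z ∈ p.support, z ∉ NX) → y ∈ NY → d ∉ NY →
    ∃ e b, ReachWithin G ((NX ∪ NY)ᶜ) d e ∧ G.Adj e b ∧ b ∈ NY := by
  intro d y p
  induction p with
  | nil => intro _ hy hd; exact absurd hy hd
  | @cons d c y h q ih =>
    intro hsup hy hd
    have hdW : d ∈ (NX ∪ NY)ᶜ := by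
      rw [Set.mem_compl_iff, Set.mem_union]
      rintro (hmem | hmem)
      · exact hsup d (by rw [Walk.support_cons]; exact List.mem_cons_self) hmem
      · exact hd hmem
    by_cases hc : c ∈ NY
    · exact ⟨d, c, reachWithin_refl hdW, h, hc⟩
    · obtain ⟨e, b, ⟨w, hw⟩, heb, hb⟩ := ih
        (fun z hz => hsup z (by rw [Walk.support_cons]; exact List.mem_cons_of_mem _ hz)) hy hc
      refine ⟨e, b, ⟨Walk.cons h w, ?_⟩, heb, hb⟩
      intro z hz
      rw [Walk.support_cons] at hz
      rcases List.mem_cons.mp hz with hzd | hz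
      · rw [hzd]; exact hdW
      · exact hw z hz

end AtMostOneAux

open AtMostOneAux

/-- Let `G` be a connected `C_{>t}`-free graph (`t ≥ 1`), `X, Y ⊆ V(G)` with `G[X]` and
`G[Y]` connected, `Y` disjoint from `N[X]`, and distance between `X` and `Y` more than
`10t`. Then at most one connected component of `G − (N[X] ∪ N[Y])` contained in the
component of `G − N[X]` containing `Y` is adjacent to a vertex of `N[X]`: any two
vertices `d₀, d₁` of such components that are adjacent to `N[X]` lie in the same
component of `G − (N[X] ∪ N[Y])`. -/
theorem at_most_one_component_adjacent {V : Type*} (G : SimpleGraph V) (t : ℕ)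
    (ht : 1 ≤ t) (hconn : G.Connected) (hfree : CgtFree G t)
    (X Y : Set V) (hX : (G.induce X).Connected) (hY : (G.induce Y).Connected)
    (hdisj : Disjoint Y (closedNbhd G X))
    (hdist : ∀ x ∈ X, ∀ y ∈ Y, 10 * t < G.dist x y)
    (d₀ d₁ : V)
    (h₀ : d₀ ∉ closedNbhd G X ∪ closedNbhd G Y)
    (h₁ : d₁ ∉ closedNbhd G X ∪ closedNbhd G Y)
    (hc₀ : ∃ y ∈ Y, ReachWithin G (closedNbhd G X)ᶜ d₀ y)
    (hc₁ : ∃ y ∈ Y, ReachWithin G (closedNbhd G X)ᶜ d₁ y)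
    (ha₀ : ∃ z ∈ closedNbhd G X, G.Adj d₀ z)
    (ha₁ : ∃ z ∈ closedNbhd G X, G.Adj d₁ z) :
    ReachWithin G (closedNbhd G X ∪ closedNbhd G Y)ᶜ d₀ d₁ := by
  classical
  by_contra hne
  obtain ⟨z₀, hz₀NX, hz₀adj⟩ := ha₀
  obtain ⟨z₁, hz₁NX, hz₁adj⟩ := ha₁
  set NX : Set V := closedNbhd G X with hNXdef
  set NY : Set V := closedNbhd G Y with hNYdef
  set W : Set V := (NX ∪ NY)ᶜ with hWdef
  -- X is nonempty
  have hXne : X.Nonempty := by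
    rcases mem_closedNbhd_iff.mp hz₀NX with h | ⟨x, hx, _⟩
    · exact ⟨z₀, h⟩
    · exact ⟨x, hx⟩
  -- the distance-to-X potential
  set g : V → ℕ := fun v => sInf ((fun x => G.dist x v) '' X) with hgdef
  have hgle : ∀ v, ∀ x ∈ X, g v ≤ G.dist x v := by
    intro v x hx
    exact Nat.sInf_le ⟨x, hx, rfl⟩
  have hgattain : ∀ v, ∃ x ∈ X, g v = G.dist x v := by
    intro v
    obtain ⟨x, hx, hxv⟩ := Nat.sInf_mem (hXne.image (fun x => G.dist x v))
    exact ⟨x, hx, hxv.symm⟩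
  have hlip : ∀ {u v : V}, G.Adj u v → g u ≤ g v + 1 := by
    intro u v huv
    obtain ⟨x, hx, hxv⟩ := hgattain v
    have h1 : G.dist x u ≤ G.dist x v + G.dist v u := hconn.dist_triangle
    have h2 : G.dist v u ≤ 1 := by
      have h3 := SimpleGraph.dist_le (Walk.cons huv.symm Walk.nil)
      simpa using h3
    have h4 := hgle u x hx
    omega
  have hgNX : ∀ v ∈ NX, g v ≤ 1 := by
    intro v hv
    rcases mem_closedNbhd_iff.mp hv with hvX | ⟨x, hx, hadj⟩
    · have h1 := hgle v v hvX
      rw [SimpleGraph.dist_self] at h1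
      omega
    · have h2 : G.dist x v ≤ 1 := by
        have h3 := SimpleGraph.dist_le (Walk.cons hadj Walk.nil)
        simpa using h3
      exact le_trans (hgle v x hx) h2
  have hgY : ∀ y ∈ Y, 10 * t < g y := by
    intro y hy
    obtain ⟨x, hx, hxy⟩ := hgattain y
    rw [hxy]
    exact hdist x hx y hy
  have hgNY : ∀ v ∈ NY, 10 * t ≤ g v := by
    intro v hv
    rcases mem_closedNbhd_iff.mp hv with hvY | ⟨y, hy, hadj⟩
    · exact le_of_lt (hgY v hvY)
    · have h1 : g y ≤ g v + 1 := hlip hadj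
      have h2 := hgY y hy
      omega
  have hNXNY : ∀ v, v ∈ NX → v ∈ NY → False := by
    intro v h1 h2
    have h3 := hgNX v h1
    have h4 := hgNY v h2
    omega
  have hYNY : Y ⊆ NY := fun y hy => mem_closedNbhd_iff.mpr (Or.inl hy)
  -- the two components
  have hd₀W : d₀ ∈ W := Set.mem_compl h₀
  have hd₁W : d₁ ∈ W := Set.mem_compl h₁
  set S₀ : Set V := {v | ReachWithin G W d₀ v} with hS₀def
  set S₁ : Set V := {v | ReachWithin G W d₁ v} with hS₁def
  have hS₀mem : ∀ v, v ∈ S₀ ↔ ReachWithin G W d₀ v := fun v => Iff.rfl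
  have hS₁mem : ∀ v, v ∈ S₁ ↔ ReachWithin G W d₁ v := fun v => Iff.rfl
  have hd₀S₀ : d₀ ∈ S₀ := (hS₀mem d₀).mpr (reachWithin_refl hd₀W)
  have hd₁S₁ : d₁ ∈ S₁ := (hS₁mem d₁).mpr (reachWithin_refl hd₁W)
  have hS₀W : ∀ v ∈ S₀, v ∈ W := fun v hv => reachWithin_mem_right ((hS₀mem v).mp hv)
  have hS₁W : ∀ v ∈ S₁, v ∈ W := fun v hv => reachWithin_mem_right ((hS₁mem v).mp hv)
  have hSdisj : ∀ v, v ∈ S₀ → v ∈ S₁ → False := by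
    intro v hv0 hv1
    exact hne (reachWithin_trans ((hS₀mem v).mp hv0) (reachWithin_symm ((hS₁mem v).mp hv1)))
  have hSWnx : ∀ v, v ∈ S₀ ∨ v ∈ S₁ → v ∈ NX → False := by
    intro v hv hvNX
    have hvW : v ∈ W := by rcases hv with hv | hv; exacts [hS₀W v hv, hS₁W v hv]
    exact hvW (Set.mem_union_left _ hvNX)
  -- choose a minimal path T between the attachment sets inside NX
  have hz₀A₀ : z₀ ∈ {v | v ∈ NX ∧ ∃ s ∈ S₀, G.Adj v s} := ⟨hz₀NX, d₀, hd₀S₀, hz₀adj.symm⟩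
  have hz₁A₁ : z₁ ∈ {v | v ∈ NX ∧ ∃ s ∈ S₁, G.Adj v s} := ⟨hz₁NX, d₁, hd₁S₁, hz₁adj.symm⟩
  obtain ⟨a₀, ha₀A, a₁, ha₁A, T, hTM, hTpath, hTchord, hTA, hTB⟩ :=
    exists_min_walk (G := G) NX {v | v ∈ NX ∧ ∃ s ∈ S₀, G.Adj v s}
      {v | v ∈ NX ∧ ∃ s ∈ S₁, G.Adj v s} (by
      obtain ⟨wt, hwt⟩ := closedNbhd_walk hX hz₀NX hz₁NX
      exact ⟨z₀, hz₀A₀, z₁, hz₁A₁, wt, hwt⟩)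
  obtain ⟨ha₀NX, s₀A, hs₀AS, ha₀sadj⟩ := ha₀A
  obtain ⟨ha₁NX, s₁A, hs₁AS, ha₁sadj⟩ := ha₁A
  -- attachments to NY
  obtain ⟨y₀, hy₀Y, ⟨p₀, hp₀⟩⟩ := hc₀
  obtain ⟨y₁, hy₁Y, ⟨p₁, hp₁⟩⟩ := hc₁
  obtain ⟨e₀, b₀, he₀reach, he₀b₀, hb₀NY⟩ :=
    first_enter (NX := NX) (NY := NY) p₀ (fun z hz => hp₀ z hz) (hYNY hy₀Y)
      (fun hmem => hd₀W (Set.mem_union_right _ hmem))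
  obtain ⟨e₁, b₁, he₁reach, he₁b₁, hb₁NY⟩ :=
    first_enter (NX := NX) (NY := NY) p₁ (fun z hz => hp₁ z hz) (hYNY hy₁Y)
      (fun hmem => hd₁W (Set.mem_union_right _ hmem))
  have he₀S₀ : e₀ ∈ S₀ := (hS₀mem e₀).mpr he₀reach
  have he₁S₁ : e₁ ∈ S₁ := (hS₁mem e₁).mpr he₁reach
  -- the bottom region
  set M' : Set V := (S₀ ∪ S₁) ∪ NY with hM'def
  have hM'memI : ∀ z, z ∈ S₀ ∨ z ∈ S₁ ∨ z ∈ NY → z ∈ M' := by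
    intro z hz
    rcases hz with hz | hz | hz
    · exact Set.mem_union_left _ (Set.mem_union_left _ hz)
    · exact Set.mem_union_left _ (Set.mem_union_right _ hz)
    · exact Set.mem_union_right _ hz
  have hM'memE : ∀ z, z ∈ M' → z ∈ S₀ ∨ z ∈ S₁ ∨ z ∈ NY := by
    intro z hz
    rcases hz with hz | hz
    · rcases hz with hz | hz
      · exact Or.inl hz
      · exact Or.inr (Or.inl hz)
    · exact Or.inr (Or.inr hz)
  have hM'NX : ∀ z, z ∈ M' → z ∈ NX → False := by
    intro z hz hzNX
    rcases hM'memE z hz with hz | hz | hz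
    · exact hSWnx z (Or.inl hz) hzNX
    · exact hSWnx z (Or.inr hz) hzNX
    · exact hNXNY z hzNX hz
  -- a walk within S₀ (resp. S₁) between any two of its members
  have hS₀walk : ∀ s ∈ S₀, ∀ e ∈ S₀, ∃ w : G.Walk s e, ∀ z ∈ w.support, z ∈ S₀ := by
    intro s hs e he
    obtain ⟨ps, hps⟩ := (hS₀mem s).mp hs
    obtain ⟨pe, hpe⟩ := (hS₀mem e).mp he
    refine ⟨ps.reverse.append pe, ?_⟩
    intro z hz
    rcases (Walk.mem_support_append_iff _ _).mp hz with hz | hz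
    · rw [Walk.support_reverse, List.mem_reverse] at hz
      exact (hS₀mem z).mpr (reachWithin_of_mem_support hps hz)
    · exact (hS₀mem z).mpr (reachWithin_of_mem_support hpe hz)
  have hS₁walk : ∀ s ∈ S₁, ∀ e ∈ S₁, ∃ w : G.Walk s e, ∀ z ∈ w.support, z ∈ S₁ := by
    intro s hs e he
    obtain ⟨ps, hps⟩ := (hS₁mem s).mp hs
    obtain ⟨pe, hpe⟩ := (hS₁mem e).mp he
    refine ⟨ps.reverse.append pe, ?_⟩
    intro z hz
    rcases (Walk.mem_support_append_iff _ _).mp hz with hz | hz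
    · rw [Walk.support_reverse, List.mem_reverse] at hz
      exact (hS₁mem z).mpr (reachWithin_of_mem_support hps hz)
    · exact (hS₁mem z).mpr (reachWithin_of_mem_support hpe hz)
  -- choose minimal path Q through the bottom
  obtain ⟨s₀, hs₀AB, s₁, hs₁AB, Q, hQM, hQpath, hQchord, hQA, hQB⟩ :=
    exists_min_walk (G := G) M' {v | v ∈ S₀ ∧ G.Adj a₀ v} {v | v ∈ S₁ ∧ G.Adj a₁ v} (by
      refine ⟨s₀A, ⟨hs₀AS, ha₀sadj⟩, s₁A, ⟨hs₁AS, ha₁sadj⟩, ?_⟩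
      obtain ⟨w1, hw1⟩ := hS₀walk s₀A hs₀AS e₀ he₀S₀
      obtain ⟨w3, hw3⟩ := hS₁walk e₁ he₁S₁ s₁A hs₁AS
      obtain ⟨w2, hw2⟩ := closedNbhd_walk hY hb₀NY hb₁NY
      refine ⟨w1.append (Walk.cons he₀b₀ (w2.append (Walk.cons he₁b₁.symm w3))), ?_⟩
      intro z hz
      rcases (Walk.mem_support_append_iff _ _).mp hz with hz | hz
      · exact hM'memI z (Or.inl (hw1 z hz))
      · rw [Walk.support_cons] at hz
        rcases List.mem_cons.mp hz with hzb | hz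
        · rw [hzb]; exact hM'memI e₀ (Or.inl he₀S₀)
        · rcases (Walk.mem_support_append_iff _ _).mp hz with hz | hz
          · exact hM'memI z (Or.inr (Or.inr (hw2 z hz)))
          · rw [Walk.support_cons] at hz
            rcases List.mem_cons.mp hz with hze | hz
            · rw [hze]; exact hM'memI b₁ (Or.inr (Or.inr hb₁NY))
            · exact hM'memI z (Or.inr (Or.inl (hw3 z hz))))
  obtain ⟨hs₀S₀, ha₀s₀⟩ := hs₀AB
  obtain ⟨hs₁S₁, ha₁s₁⟩ := hs₁AB
  -- Q must meet NY, else d₀ and d₁ would be connected in W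
  have hmexists : ∃ m ∈ Q.support, m ∈ NY := by
    by_contra hno
    push_neg at hno
    have hQW : ∀ z ∈ Q.support, z ∈ W := by
      intro z hz
      rcases hM'memE z (hQM z hz) with hz' | hz' | hz'
      · exact hS₀W z hz'
      · exact hS₁W z hz'
      · exact absurd hz' (hno z hz)
    exact hne (reachWithin_trans ((hS₀mem s₀).mp hs₀S₀)
      (reachWithin_trans ⟨Q, hQW⟩ (reachWithin_symm ((hS₁mem s₁).mp hs₁S₁))))
  obtain ⟨m, hmQ, hmNY⟩ := hmexists
  -- the cycle
  set C : G.Walk a₀ a₀ :=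
    Walk.cons ha₀s₀ (Q.append (Walk.cons ha₁s₁.symm T.reverse)) with hCdef
  have hCsupp : C.support = a₀ :: (Q.support ++ T.reverse.support) := by
    rw [hCdef, Walk.support_cons, Walk.support_append, Walk.support_cons, List.tail_cons]
  have hCedges : C.edges = s(a₀, s₀) :: (Q.edges ++ s(s₁, a₁) :: T.reverse.edges) := by
    rw [hCdef, Walk.edges_cons, Walk.edges_append, Walk.edges_cons]
  have hTrevmem : ∀ z, z ∈ T.reverse.support ↔ z ∈ T.support := by
    intro z
    rw [Walk.support_reverse, List.mem_reverse]
  -- helpers about edge endpoints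
  have hQedge_mem : ∀ x y : V, s(x, y) ∈ Q.edges → x ∈ Q.support :=
    fun x y h => Q.fst_mem_support_of_mem_edges h
  have hTrevedge_mem : ∀ x y : V, s(x, y) ∈ T.reverse.edges → x ∈ T.support := by
    intro x y h
    rw [← hTrevmem]
    exact T.reverse.fst_mem_support_of_mem_edges h
  -- C is a cycle
  have hcyc : C.IsCycle := by
    constructor
    · constructor
      · constructor
        rw [hCedges]
        refine List.nodup_cons.mpr ⟨?_, ?_⟩
        · intro hmem
          rcases List.mem_append.mp hmem with hmem | hmem
          · exact hM'NX a₀ (hQM a₀ (hQedge_mem _ _ hmem)) ha₀NX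
          · rcases List.mem_cons.mp hmem with heq | hmem
            · rcases Sym2.eq_iff.mp heq with ⟨h1, h2⟩ | ⟨h1, h2⟩
              · exact hSWnx s₁ (Or.inr hs₁S₁) (by rw [← h1]; exact ha₀NX)
              · exact hSdisj s₀ hs₀S₀ (by rw [h2]; exact hs₁S₁)
            · exact hM'NX s₀ (hM'memI s₀ (Or.inl hs₀S₀)) (hTM s₀ (hTrevedge_mem _ _ (by
                rwa [Sym2.eq_swap] at hmem)))
        · refine List.Nodup.append hQpath.isTrail.edges_nodup ?_ ?_
          · refine List.nodup_cons.mpr ⟨?_, hTpath.reverse.isTrail.edges_nodup⟩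
            intro hmem
            exact hM'NX s₁ (hM'memI s₁ (Or.inr (Or.inl hs₁S₁))) (hTM s₁ (hTrevedge_mem _ _ hmem))
          · intro e
            induction e using Sym2.ind with
            | _ x y =>
              intro he he'
              have hx : x ∈ Q.support := hQedge_mem _ _ he
              rcases List.mem_cons.mp he' with heq | he'
              · rcases Sym2.eq_iff.mp heq with ⟨h1, h2⟩ | ⟨h1, h2⟩
                · have hy : y ∈ Q.support := hQedge_mem _ _ (by rwa [Sym2.eq_swap] at he)
                  exact hM'NX a₁ (hQM a₁ (by rw [← h2]; exact hy)) ha₁NX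
                · exact hM'NX a₁ (hQM a₁ (by rw [← h1]; exact hx)) ha₁NX
              · exact hM'NX x (hQM x hx) (hTM x (hTrevedge_mem _ _ he'))
      · rw [hCdef]
        simp
    · rw [hCsupp]
      simp only [List.tail_cons]
      refine List.Nodup.append hQpath.support_nodup ?_ ?_
      · rw [Walk.support_reverse]
        exact List.nodup_reverse.mpr hTpath.support_nodup
      · intro z hz hz'
        rw [hTrevmem] at hz'
        exact hM'NX z (hQM z hz) (hTM z hz')
  -- C is chordless
  have hsub : ∀ z ∈ C.support, z ∈ Q.support ∨ z ∈ T.support := by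
    intro z hz
    rw [hCsupp] at hz
    rcases List.mem_cons.mp hz with hza | hz
    · rw [hza]; exact Or.inr T.start_mem_support
    · rcases List.mem_append.mp hz with hz | hz
      · exact Or.inl hz
      · exact Or.inr ((hTrevmem z).mp hz)
  have hQmemC : ∀ e, e ∈ Q.edges → e ∈ C.edges := by
    intro e he
    rw [hCedges]
    exact List.mem_cons_of_mem _ (List.mem_append_left _ he)
  have hTmemC : ∀ e, e ∈ T.edges → e ∈ C.edges := by
    intro e he
    rw [hCedges]
    refine List.mem_cons_of_mem _ (List.mem_append_right _ (List.mem_cons_of_mem _ ?_))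
    rw [Walk.edges_reverse, List.mem_reverse]
    exact he
  have hQT : ∀ u v, u ∈ T.support → v ∈ Q.support → G.Adj u v → s(u, v) ∈ C.edges := by
    intro u v hu hv huv
    rcases hM'memE v (hQM v hv) with hvS₀ | hvS₁ | hvNY
    · have hua : u = a₀ := hTA u hu ⟨hTM u hu, v, hvS₀, huv⟩
      have hadj' : G.Adj a₀ v := by rw [← hua]; exact huv
      have hvs : v = s₀ := hQA v hv ⟨hvS₀, hadj'⟩
      rw [hua, hvs, hCedges]
      exact List.mem_cons_self
    · have hua : u = a₁ := hTB u hu ⟨hTM u hu, v, hvS₁, huv⟩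
      have hadj' : G.Adj a₁ v := by rw [← hua]; exact huv
      have hvs : v = s₁ := hQB v hv ⟨hvS₁, hadj'⟩
      have hmem : s(s₁, a₁) ∈ C.edges := by
        rw [hCedges]
        exact List.mem_cons_of_mem _ (List.mem_append_right _ (List.mem_cons_self))
      rw [hua, hvs, Sym2.eq_swap]
      exact hmem
    · exfalso
      have h1 := hgNX u (hTM u hu)
      have h2 := hgNY v hvNY
      have h3 : g v ≤ g u + 1 := hlip huv.symm
      omega
  have hchordfree : ∀ u ∈ C.support, ∀ v ∈ C.support, G.Adj u v → s(u, v) ∈ C.edges := by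
    intro u hu v hv huv
    rcases hsub u hu with huQ | huT <;> rcases hsub v hv with hvQ | hvT
    · exact hQmemC _ (hQchord u v huQ hvQ huv)
    · have h1 := hQT v u hvT huQ huv.symm
      rwa [Sym2.eq_swap] at h1
    · exact hQT u v huT hvQ huv
    · exact hTmemC _ (hTchord u v huT hvT huv)
  -- conclude
  have hlen : C.length ≤ t := hfree a₀ C ⟨hcyc, hchordfree⟩
  have hbound : g m ≤ g s₀ + (Q.takeUntil m hmQ).length := by
    have h1 := lip_walk hlip ((Q.takeUntil m hmQ).reverse)
    rwa [Walk.length_reverse] at h1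
  have htklen : (Q.takeUntil m hmQ).length ≤ Q.length := Q.length_takeUntil_le hmQ
  have hQC : Q.length ≤ C.length := by
    rw [hCdef, Walk.length_cons, Walk.length_append, Walk.length_cons]
    omega
  have hgs₀ : g s₀ ≤ g a₀ + 1 := hlip ha₀s₀.symm
  have hga₀ : g a₀ ≤ 1 := hgNX a₀ ha₀NX
  have hgm : 10 * t ≤ g m := hgNY m hmNY
  omega
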